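/- Let q be a power of a prime p, let n ≥ 2, let r be an integer with ⌈n/2⌉ ≤ r ≤ n-1 and gcd(n,r) = 1, and let g_s(y) = y^{q^s} + a_{s-1} y^{q^{s-1}} + ... + a_0 y ∈ F_{q^n}[y] be a separable q-polynomial (a_0 ≠ 0) that splits into linear factors over F_{q^n}, with s ≥ r + 1. If Q(y), U(y) ∈ F_{q^n}[y] are nonzero q-polynomials with deg(U) ≤ q^{n-r-1} satisfying Q(y)^{q^{n-r}} = y + U(g_s(y)), then Q(y) = y^{q^r} and deg(U(y)) = q^{n-s}; in particular y^{q^n} - y = U(g_s(y)) for a q-polynomial U of degree q^{n-s}. -/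

import Mathlib

open Polynomial

/-- A `q`-polynomial (linearized polynomial): every monomial exponent is a power of `q`. -/
def IsqPoly (q : ℕ) {F : Type*} [Semiring F] (f : Polynomial F) : Prop :=
  ∀ i ∈ f.support, ∃ k : ℕ, i = q ^ k

/-- Proposition 2.11 (`propchave`), case `s ≥ r + 1`: any nonzero `q`-polynomials `Q, U` with
`deg U ≤ q^{n-r-1}` and `Q(y)^{q^{n-r}} = y + U(g_s(y))` satisfy `Q(y) = y^{q^r}` and
`deg U = q^{n-s}`; in particular `y^{q^n} - y = U(g_s(y))`. -/
theorem propchave_case_s_ge_r_add_one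
    (p q e n r s : ℕ) (hp : p.Prime) (he : 0 < e) (hq : q = p ^ e)
    (hn : 2 ≤ n) (hr1 : n ≤ 2 * r) (hr2 : r ≤ n - 1) (hgcd : Nat.gcd n r = 1)
    (hs : r + 1 ≤ s)
    (F : Type*) [Field F] [Fintype F] (hF : Fintype.card F = q ^ n)
    (a : ℕ → F) (ha : a 0 ≠ 0)
    (gs : Polynomial F)
    (hgs : gs = X ^ q ^ s + ∑ i ∈ Finset.range s, C (a i) * X ^ q ^ i)
    (hsplit : Splits gs)
    (Q U : Polynomial F) (hQ0 : Q ≠ 0) (hU0 : U ≠ 0)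
    (hQq : IsqPoly q Q) (hUq : IsqPoly q U)
    (hUdeg : U.natDegree ≤ q ^ (n - r - 1))
    (heq : Q ^ q ^ (n - r) = X + U.comp gs) :
    Q = X ^ q ^ r ∧ U.natDegree = q ^ (n - s) ∧
      X ^ q ^ n - X = U.comp gs := by
  classical
  have hq2 : 2 ≤ q := by
    have : 2 ≤ p := hp.two_le
    have : p ≤ p ^ e := Nat.le_self_pow he.ne' p
    omega
  have hrn : r + 1 ≤ n := by omega
  have hr1' : 1 ≤ r := by omega
  have hs2 : 2 ≤ s := by omega
  -- p = 0 in F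
  have hpF : (p : F) = 0 := by
    have h1 : ((q ^ n : ℕ) : F) = 0 := by
      rw [← hF]; exact FiniteField.cast_card_eq_zero F
    have h2 : ((p : F)) ^ (e * n) = 0 := by
      push_cast [hq] at h1
      rwa [← pow_mul] at h1
    exact pow_eq_zero_iff (by positivity) |>.mp h2
  have hqiF : ∀ i : ℕ, 1 ≤ i → ((q ^ i : ℕ) : F) = 0 := by
    intro i hi
    push_cast [hq]
    rw [← pow_mul, hpF]
    exact zero_pow (by positivity)
  -- degree of gs
  have hdgs : gs.natDegree = q ^ s := by
    rw [hgs]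
    have h1 : (∑ i ∈ Finset.range s, C (a i) * X ^ q ^ i).natDegree < q ^ s := by
      refine lt_of_le_of_lt (Polynomial.natDegree_sum_le_of_forall_le _ _ ?_)
        (Nat.pow_lt_pow_right (by omega) (by omega) : q ^ (s - 1) < q ^ s)
      intro i hi
      refine le_trans (Polynomial.natDegree_C_mul_le _ _) ?_
      rw [Polynomial.natDegree_X_pow]
      exact Nat.pow_le_pow_right (by omega) (by simp at hi; omega)
    rw [Polynomial.natDegree_add_eq_left_of_natDegree_lt
      (by rwa [Polynomial.natDegree_X_pow]), Polynomial.natDegree_X_pow]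
  have hgs0 : gs ≠ 0 := by
    intro h
    rw [h, Polynomial.natDegree_zero] at hdgs
    exact (pow_pos (by omega : 0 < q) s).ne' hdgs.symm
  -- separability
  have hderiv : derivative gs = C (a 0) := by
    rw [hgs, derivative_add, derivative_X_pow, derivative_sum, hqiF s (by omega)]
    rw [Finset.sum_eq_single 0]
    · simp
    · intro i hi hne
      rw [derivative_C_mul, derivative_X_pow, hqiF i (by omega)]
      simp
    · intro h
      exact absurd (Finset.mem_range.mpr (by omega)) h
  have hsep : gs.Separable := by
    refine ⟨0, C (a 0)⁻¹, ?_⟩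
    rw [hderiv, ← C_mul, inv_mul_cancel₀ ha]
    simp
  -- number of roots
  have hcard : gs.roots.toFinset.card = q ^ s := by
    have h1 : Multiset.card gs.roots = gs.natDegree :=
      (Polynomial.splits_iff_card_roots).mp hsplit
    rw [Multiset.toFinset_card_of_nodup (Polynomial.nodup_roots hsep), h1, hdgs]
  -- U has zero constant coefficient
  have hUcoeff0 : U.coeff 0 = 0 := by
    by_contra h
    obtain ⟨k, hk⟩ := hUq 0 (Polynomial.mem_support_iff.mpr h)
    exact (pow_pos (by omega : 0 < q) k).ne' hk.symm
  -- U has natDegree ≥ 1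
  have hdU1 : 1 ≤ U.natDegree := by
    obtain ⟨k, hk⟩ := hUq U.natDegree (Polynomial.natDegree_mem_support_of_nonzero hU0)
    rw [hk]
    exact Nat.one_le_pow _ _ (by omega)
  -- degree equation
  have hdeq : q ^ (n - r) * Q.natDegree = U.natDegree * q ^ s := by
    have h1 := congrArg natDegree heq
    rw [Polynomial.natDegree_pow,
      Polynomial.natDegree_add_eq_right_of_natDegree_lt,
      Polynomial.natDegree_comp, hdgs] at h1
    · exact h1
    · rw [Polynomial.natDegree_comp, hdgs, Polynomial.natDegree_X]
      calc 1 < q ^ s := Nat.one_lt_pow (by omega) (by omega)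
        _ ≤ U.natDegree * q ^ s := Nat.le_mul_of_pos_left _ (by omega)
  have hdQ : Q.natDegree ≤ q ^ (s - 1) := by
    have h2 : q ^ (n - r) * Q.natDegree ≤ q ^ (n - r) * q ^ (s - 1) := by
      rw [hdeq]
      calc U.natDegree * q ^ s ≤ q ^ (n - r - 1) * q ^ s :=
            Nat.mul_le_mul_right _ hUdeg
        _ = q ^ (n - r) * q ^ (s - 1) := by
            rw [← pow_add, ← pow_add]; congr 1; omega
    exact Nat.le_of_mul_le_mul_left h2 (pow_pos (by omega) _)
  -- evaluation at roots of gs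
  have hroot : ∀ w ∈ gs.roots.toFinset, (Q - X ^ q ^ r).eval w = 0 := by
    intro w hw
    rw [Multiset.mem_toFinset, Polynomial.mem_roots hgs0] at hw
    have hw0 : gs.eval w = 0 := hw
    have h1 : (Q.eval w) ^ q ^ (n - r) = w := by
      have h2 := congrArg (Polynomial.eval w) heq
      rw [Polynomial.eval_pow, Polynomial.eval_add, Polynomial.eval_X,
        Polynomial.eval_comp, hw0, ← Polynomial.coeff_zero_eq_eval_zero,
        hUcoeff0, add_zero] at h2
      exact h2
    have h3 : (Q.eval w) ^ (q ^ (n - r) * q ^ r) = w ^ q ^ r := by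
      rw [pow_mul, h1]
    rw [← pow_add, show n - r + r = n by omega] at h3
    have h4 : (Q.eval w) ^ q ^ n = Q.eval w := by
      rw [← hF]; exact FiniteField.pow_card _
    rw [h4] at h3
    simp [h3]
  -- Q = X ^ q ^ r
  have hQX : Q = X ^ q ^ r := by
    by_contra hne
    have hD0 : Q - X ^ q ^ r ≠ 0 := sub_ne_zero.mpr hne
    have hsub : gs.roots.toFinset ⊆ (Q - X ^ q ^ r).roots.toFinset := by
      intro w hw
      rw [Multiset.mem_toFinset, Polynomial.mem_roots hD0]
      exact hroot w hw
    have h1 : q ^ s ≤ (Q - X ^ q ^ r).natDegree :=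
      calc q ^ s = gs.roots.toFinset.card := hcard.symm
        _ ≤ (Q - X ^ q ^ r).roots.toFinset.card := Finset.card_le_card hsub
        _ ≤ Multiset.card (Q - X ^ q ^ r).roots := Multiset.toFinset_card_le _
        _ ≤ (Q - X ^ q ^ r).natDegree := Polynomial.card_roots' _
    have h2 : (Q - X ^ q ^ r).natDegree ≤ q ^ (s - 1) := by
      refine le_trans (Polynomial.natDegree_sub_le _ _) (max_le hdQ ?_)
      rw [Polynomial.natDegree_X_pow]
      exact Nat.pow_le_pow_right (by omega) (by omega)
    exact absurd (h1.trans h2)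
      (not_le.mpr (Nat.pow_lt_pow_right (by omega) (by omega)))
  -- conclusions
  have hXqn : Q ^ q ^ (n - r) = X ^ q ^ n := by
    rw [hQX, ← pow_mul, ← pow_add, show r + (n - r) = n by omega]
  have hcomp : X ^ q ^ n - X = U.comp gs := by
    rw [← hXqn, heq]; ring
  refine ⟨hQX, ?_, hcomp⟩
  have hdQX : Q.natDegree = q ^ r := by rw [hQX, Polynomial.natDegree_X_pow]
  have h5 : q ^ n = U.natDegree * q ^ s := by
    rw [← hdeq, hdQX, ← pow_add]
    congr 1
    omega
  have hsn : s ≤ n := by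
    by_contra h
    have : q ^ n < q ^ s := Nat.pow_lt_pow_right (by omega) (by omega)
    have : q ^ s ≤ U.natDegree * q ^ s := Nat.le_mul_of_pos_left _ (by omega)
    omega
  have h6 : q ^ (n - s) * q ^ s = U.natDegree * q ^ s := by
    rw [← pow_add, show n - s + s = n by omega]
    exact h5
  exact (Nat.eq_of_mul_eq_mul_right (pow_pos (by omega) s) h6).symm
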